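/- Let τ > 0, L > 0 and a ∈ ℝ, and define Φ(x) = (1/2)·(tanh(τ·(x − a + L/4)) − tanh(τ·(x − a − L/4))). Then for every x ∈ ℝ one has 0 < Φ(x) ≤ exp(−2·τ·max{|x − a| − L/4, 0}). -/
import Mathlib

private lemma tanh_exp_formula (u : ℝ) :
    Real.tanh u = 1 - 2 / (Real.exp (2 * u) + 1) := by
  have h1 : Real.exp (2 * u) = Real.exp u * Real.exp u := by
    rw [two_mul, Real.exp_add]
  have h2 : Real.exp (-u) = 1 / Real.exp u := by
    rw [Real.exp_neg]; ring
  have hp : 0 < Real.exp u := Real.exp_pos u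
  rw [Real.tanh_eq_sinh_div_cosh, Real.sinh_eq, Real.cosh_eq, h1, h2]
  field_simp
  ring

private lemma tanh_lt_one' (u : ℝ) : Real.tanh u < 1 := by
  rw [tanh_exp_formula]
  have := Real.exp_pos (2 * u)
  have : 0 < 2 / (Real.exp (2 * u) + 1) := by positivity
  linarith

private lemma neg_one_lt_tanh (u : ℝ) : -1 < Real.tanh u := by
  rw [tanh_exp_formula]
  have h : 0 < Real.exp (2 * u) + 1 := by positivity
  have h2 : 2 / (Real.exp (2 * u) + 1) < 2 :=
    (div_lt_iff₀ h).mpr (by nlinarith [Real.exp_pos (2 * u)])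
  linarith

private lemma tanh_strictMono' : StrictMono Real.tanh := by
  intro a b hab
  rw [tanh_exp_formula, tanh_exp_formula]
  have ha : 0 < Real.exp (2 * a) + 1 := by positivity
  have hb : 0 < Real.exp (2 * b) + 1 := by positivity
  have : Real.exp (2 * a) < Real.exp (2 * b) := Real.exp_lt_exp.mpr (by linarith)
  have : 2 / (Real.exp (2 * b) + 1) < 2 / (Real.exp (2 * a) + 1) :=
    div_lt_div_of_pos_left (by norm_num) ha (by linarith)
  linarith

private lemma one_sub_tanh_le (u : ℝ) : 1 - Real.tanh u ≤ 2 * Real.exp (-(2 * u)) := by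
  rw [tanh_exp_formula]
  have h1 : 0 < Real.exp (2 * u) := Real.exp_pos _
  have h2 : Real.exp (-(2 * u)) = 1 / Real.exp (2 * u) := by rw [Real.exp_neg]; ring
  rw [h2]
  have : 2 / (Real.exp (2 * u) + 1) ≤ 2 / Real.exp (2 * u) :=
    div_le_div_of_nonneg_left (by norm_num) h1 (by linarith)
  calc 1 - (1 - 2 / (Real.exp (2 * u) + 1)) = 2 / (Real.exp (2 * u) + 1) := by ring
    _ ≤ 2 / Real.exp (2 * u) := this
    _ = 2 * (1 / Real.exp (2 * u)) := by ring

/-- Pointwise bounds for the cut-off function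
`Φ(x) = (1/2)(tanh(τ(x - a + L/4)) - tanh(τ(x - a - L/4)))`:
it is positive and bounded by `exp(-2τ max{|x-a| - L/4, 0})`. -/
theorem cutoff_pointwise_bounds (τ L a : ℝ) (hτ : 0 < τ) (hL : 0 < L)
    (Φ : ℝ → ℝ)
    (hΦ : ∀ x : ℝ, Φ x =
      (1 / 2) * (Real.tanh (τ * (x - a + L / 4)) - Real.tanh (τ * (x - a - L / 4)))) :
    ∀ x : ℝ, 0 < Φ x ∧ Φ x ≤ Real.exp (-2 * τ * max (|x - a| - L / 4) 0) := by
  intro x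
  rw [hΦ x]
  set p := τ * (x - a + L / 4) with hp
  set q := τ * (x - a - L / 4) with hq
  have hpq : q < p := by
    have : x - a - L / 4 < x - a + L / 4 := by linarith
    exact mul_lt_mul_of_pos_left this hτ
  constructor
  · have := tanh_strictMono' hpq
    linarith
  · rcases le_or_gt (|x - a| - L / 4) 0 with hcase | hcase
    · have hmax : max (|x - a| - L / 4) 0 = 0 := max_eq_right hcase
      rw [hmax, mul_zero, Real.exp_zero]
      have h1 := tanh_lt_one' p
      have h2 := neg_one_lt_tanh q
      linarith
    · have hmax : max (|x - a| - L / 4) 0 = |x - a| - L / 4 := max_eq_left hcase.le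
      rw [hmax]
      rcases abs_cases (x - a) with ⟨habs, hsgn⟩ | ⟨habs, hsgn⟩
      · -- x - a ≥ 0, so |x-a| = x - a, and x - a > L/4
        have hq0 : q = τ * (|x - a| - L / 4) := by rw [hq, habs]
        have key := one_sub_tanh_le q
        have h1 := tanh_lt_one' p
        have : -(2 * q) = -2 * τ * (|x - a| - L / 4) := by linear_combination (-2) * hq0
        rw [← this]
        linarith
      · -- x - a < 0, |x-a| = -(x-a)
        have hp0 : -p = τ * (|x - a| - L / 4) := by rw [hp, habs]; ring
        have key := one_sub_tanh_le (-p)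
        rw [Real.tanh_neg] at key
        have h2 := neg_one_lt_tanh q
        have : -(2 * -p) = -2 * τ * (|x - a| - L / 4) := by linear_combination (-2) * hp0
        rw [← this]
        linarith
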